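/- Let d ≥ 2, n ≥ 2, and suppose there exist n pairwise mutually unbiased orthonormal bases {b^y_j}_{j=1}^{d} (y = 1,…,n) of ℂ^d. Then there exist a unit vector ψ ∈ ℂ^d ⊗ ℂ^d, and for every pair (y,z) with 1 ≤ y < z ≤ n and every j,k ∈ {1,…,d} a POVM {A^{(y,z)jk}_1, A^{(y,z)jk}_2, A^{(y,z)jk}_⊥} on ℂ^d (positive semidefinite matrices summing to the identity), such that, with B^y_j = |b^y_j⟩⟨b^y_j|, the Bell value W_{d,n} = ∑_{1 ≤ y < z ≤ n} ∑_{j,k=1}^{d} [ ⟨ψ, (A^{(y,z)jk}_1 − A^{(y,z)jk}_2) ⊗ (B^y_j − B^z_k) ψ⟩ − (1/2)·√((d−1)/d)·⟨ψ, (A^{(y,z)jk}_1 + A^{(y,z)jk}_2) ⊗ 𝟙 ψ⟩ ] equals (n(n−1)/2)·√(d(d−1)). -/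

import Mathlib

open Finset Matrix
open scoped Kronecker ComplexInnerProductSpace ComplexOrder

/-- The rank-one projection `|v⟩⟨v|` as a matrix. -/
def outerProj {d : ℕ} (v : EuclideanSpace ℂ (Fin d)) : Matrix (Fin d) (Fin d) ℂ :=
  Matrix.of fun i j => v i * (starRingEnd ℂ) (v j)

/- ---------------- auxiliary definitions and lemmas ---------------- -/

def outerP {d : ℕ} (v w : EuclideanSpace ℂ (Fin d)) : Matrix (Fin d) (Fin d) ℂ :=
  Matrix.of fun i j => v i * (starRingEnd ℂ) (w j)

lemma outerProj_eq_outerP {d : ℕ} (v : EuclideanSpace ℂ (Fin d)) :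
    outerProj v = outerP v v := rfl

lemma outerP_mul {d : ℕ} (a b c e : EuclideanSpace ℂ (Fin d)) :
    outerP a b * outerP c e = (∑ k, (starRingEnd ℂ) (b k) * c k) • outerP a e := by
  ext i j
  simp only [Matrix.mul_apply, outerP, Matrix.of_apply, Matrix.smul_apply, smul_eq_mul,
    Finset.sum_mul]
  exact Finset.sum_congr rfl fun k _ => by ring

lemma outerP_trace {d : ℕ} (a b : EuclideanSpace ℂ (Fin d)) :
    (outerP a b).trace = ∑ i, a i * (starRingEnd ℂ) (b i) := rfl

lemma outerP_conjTranspose {d : ℕ} (a b : EuclideanSpace ℂ (Fin d)) :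
    (outerP a b)ᴴ = outerP b a := by
  ext i j
  simp [outerP, Matrix.conjTranspose_apply, mul_comm]

section Dalgebra
variable {d : ℕ} (v w : EuclideanSpace ℂ (Fin d)) (m : ℂ)

lemma D_sq (hv : ∑ k, (starRingEnd ℂ) (v k) * v k = 1)
    (hw : ∑ k, (starRingEnd ℂ) (w k) * w k = 1)
    (hm : ∑ k, (starRingEnd ℂ) (v k) * w k = m)
    (hm' : ∑ k, (starRingEnd ℂ) (w k) * v k = (starRingEnd ℂ) m) :
    (outerP v v - outerP w w) * (outerP v v - outerP w w)
      = outerP v v + outerP w w - m • outerP v w - (starRingEnd ℂ) m • outerP w v := by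
  rw [sub_mul, mul_sub, mul_sub, outerP_mul, outerP_mul, outerP_mul, outerP_mul,
    hv, hw, hm, hm', one_smul, one_smul]
  abel

lemma D_cube (hv : ∑ k, (starRingEnd ℂ) (v k) * v k = 1)
    (hw : ∑ k, (starRingEnd ℂ) (w k) * w k = 1)
    (hm : ∑ k, (starRingEnd ℂ) (v k) * w k = m)
    (hm' : ∑ k, (starRingEnd ℂ) (w k) * v k = (starRingEnd ℂ) m) :
    (outerP v v - outerP w w) * (outerP v v - outerP w w) * (outerP v v - outerP w w)
      = ((1 : ℂ) - m * (starRingEnd ℂ) m) • (outerP v v - outerP w w) := by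
  rw [D_sq v w m hv hw hm hm']
  simp only [sub_mul, add_mul, mul_sub, smul_mul_assoc, outerP_mul, hv, hw, hm, hm',
    one_smul, smul_smul, smul_sub]
  module
end Dalgebra

lemma D_sq_trace {d : ℕ} (v w : EuclideanSpace ℂ (Fin d)) (m : ℂ)
    (hv : ∑ k, (starRingEnd ℂ) (v k) * v k = 1)
    (hw : ∑ k, (starRingEnd ℂ) (w k) * w k = 1)
    (hm : ∑ k, (starRingEnd ℂ) (v k) * w k = m)
    (hm' : ∑ k, (starRingEnd ℂ) (w k) * v k = (starRingEnd ℂ) m) :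
    ((outerP v v - outerP w w) * (outerP v v - outerP w w)).trace
      = 2 - m * (starRingEnd ℂ) m - (starRingEnd ℂ) m * m := by
  rw [D_sq v w m hv hw hm hm', Matrix.trace_sub, Matrix.trace_sub, Matrix.trace_add,
    Matrix.trace_smul, Matrix.trace_smul, outerP_trace, outerP_trace, outerP_trace,
    outerP_trace]
  have e1 : ∑ i, v i * (starRingEnd ℂ) (v i) = 1 := by
    rw [← hv]; exact Finset.sum_congr rfl fun i _ => mul_comm _ _
  have e2 : ∑ i, w i * (starRingEnd ℂ) (w i) = 1 := by
    rw [← hw]; exact Finset.sum_congr rfl fun i _ => mul_comm _ _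
  have e3 : ∑ i, v i * (starRingEnd ℂ) (w i) = (starRingEnd ℂ) m := by
    rw [← hm, map_sum]
    exact Finset.sum_congr rfl fun i _ => by simp [_root_.map_mul, mul_comm]
  have e4 : ∑ i, w i * (starRingEnd ℂ) (v i) = m := by
    have := congrArg (starRingEnd ℂ) hm'
    rw [map_sum] at this
    simp only [_root_.map_mul, Complex.conj_conj] at this
    rw [← this]
  rw [e1, e2, e3, e4]
  simp only [smul_eq_mul]
  ring

lemma sum_tr {d : ℕ} (X Y : Matrix (Fin d) (Fin d) ℂ) :
    ∑ i, ∑ j, Xᵀ i j * Y i j = (X * Y).trace := by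
  rw [Finset.sum_comm]
  simp only [Matrix.trace, Matrix.diag, Matrix.mul_apply, Matrix.transpose_apply]

lemma psd_of_idem {d : ℕ} (M : Matrix (Fin d) (Fin d) ℂ) (h1 : Mᴴ = M) (h2 : M * M = M) :
    M.PosSemidef := by
  have := Matrix.posSemidef_conjTranspose_mul_self M
  rwa [h1, h2] at this

lemma Pplus_idem {d : ℕ} (D : Matrix (Fin d) (Fin d) ℂ) (l : ℂ) (hl : l ≠ 0)
    (hD3 : D * D * D = (l^2) • D) (e : ℂ) (he2 : e^2 = 1) :
    ((1/(2*l^2)) • (D*D) + (e * (1/(2*l))) • D) * ((1/(2*l^2)) • (D*D) + (e * (1/(2*l))) • D)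
      = (1/(2*l^2)) • (D*D) + (e * (1/(2*l))) • D := by
  have h4 : (D*D) * (D*D) = l^2 • (D*D) := by
    rw [← mul_assoc, hD3, smul_mul_assoc]
  have h3b : D * (D*D) = l^2 • D := by rw [← mul_assoc, hD3]
  simp only [add_mul, mul_add, smul_mul_assoc, mul_smul_comm, h4, hD3, h3b, smul_smul]
  have he : e = 1 ∨ e = -1 := by
    have : (e - 1) * (e + 1) = 0 := by linear_combination he2
    rcases mul_eq_zero.mp this with h | h
    · exact Or.inl (by linear_combination h)
    · exact Or.inr (by linear_combination h)
  rcases he with h | h <;> subst h <;> match_scalars <;> field_simp <;> ring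

lemma Q_idem {d : ℕ} (D : Matrix (Fin d) (Fin d) ℂ) (l : ℂ) (hl : l ≠ 0)
    (hD3 : D * D * D = (l^2) • D) :
    (1 - (1/l^2) • (D*D)) * (1 - (1/l^2) • (D*D)) = 1 - (1/l^2) • (D*D) := by
  have h4 : (D*D) * (D*D) = l^2 • (D*D) := by
    rw [← mul_assoc, hD3, smul_mul_assoc]
  simp only [sub_mul, mul_sub, one_mul, mul_one, smul_mul_assoc, mul_smul_comm, h4, smul_smul]
  match_scalars <;> field_simp <;> ring

noncomputable def psiME (d : ℕ) : EuclideanSpace ℂ (Fin d × Fin d) :=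
  WithLp.toLp 2 fun p : Fin d × Fin d => if p.1 = p.2 then ((1 / Real.sqrt d : ℝ) : ℂ) else 0

lemma psiME_norm {d : ℕ} (hd : 0 < d) : ‖psiME d‖ = 1 := by
  have hd' : (0:ℝ) < d := by exact_mod_cast hd
  rw [EuclideanSpace.norm_eq]
  have : ∀ p : Fin d × Fin d, ‖psiME d p‖^2 = if p.1 = p.2 then 1/(d:ℝ) else 0 := by
    intro p
    by_cases h : p.1 = p.2 <;> simp [psiME, h]
  rw [Finset.sum_congr rfl fun p _ => this p, Fintype.sum_prod_type]
  simp only [Finset.sum_ite_eq, Finset.mem_univ, if_true]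
  rw [Finset.sum_const, Finset.card_univ, Fintype.card_fin, nsmul_eq_mul]
  rw [mul_one_div, div_self hd'.ne', Real.sqrt_one]

lemma psiME_inner_kron {d : ℕ} (hd : 0 < d) (M N : Matrix (Fin d) (Fin d) ℂ) :
    ⟪psiME d, (Matrix.toEuclideanLin (M ⊗ₖ N)) (psiME d)⟫
      = (1 / d : ℂ) * ∑ i, ∑ j, M i j * N i j := by
  have hd' : (0:ℝ) < d := by exact_mod_cast hd
  have hs : ((1 / Real.sqrt d : ℝ) : ℂ) * ((1 / Real.sqrt d : ℝ) : ℂ) = (1/d : ℂ) := by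
    rw [← Complex.ofReal_mul, div_mul_div_comm, one_mul, Real.mul_self_sqrt hd'.le]
    push_cast
    ring
  rw [Matrix.toEuclideanLin_apply, PiLp.inner_apply]
  simp only [PiLp.toLp_apply, Matrix.mulVec, dotProduct, RCLike.inner_apply]
  have key : ∀ q : Fin d × Fin d, (WithLp.equiv 2 _) (psiME d) q
      = if q.1 = q.2 then ((1 / Real.sqrt d : ℝ) : ℂ) else 0 := fun q => rfl
  have key2 : ∀ q : Fin d × Fin d, (psiME d) q
      = if q.1 = q.2 then ((1 / Real.sqrt d : ℝ) : ℂ) else 0 := fun q => rfl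
  rw [Fintype.sum_prod_type]
  simp only [key, key2, kroneckerMap_apply, mul_ite, mul_zero, Fintype.sum_prod_type,
    Finset.sum_ite_eq, Finset.mem_univ, if_true, apply_ite (starRingEnd ℂ), map_zero,
    Complex.conj_ofReal, ite_mul, zero_mul]
  rw [Finset.mul_sum]
  refine Finset.sum_congr rfl fun i _ => ?_
  rw [Finset.sum_mul, Finset.mul_sum]
  refine Finset.sum_congr rfl fun j _ => ?_
  linear_combination (M i j * N i j) * hs

lemma card_lt_pairs (n : ℕ) :
    2 * (Finset.univ.filter (fun p : Fin n × Fin n => p.1 < p.2)).card = n * (n - 1) := by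
  have hswap : (Finset.univ.filter (fun p : Fin n × Fin n => p.1 < p.2)).card
      = (Finset.univ.filter (fun p : Fin n × Fin n => p.2 < p.1)).card := by
    apply Finset.card_bij (fun p _ => Prod.swap p)
    · intro p hp; simp_all
    · intro p hp q hq h; exact Prod.swap_injective h
    · intro p hp; exact ⟨Prod.swap p, by simp_all, by simp⟩
  have hunion : (Finset.univ.filter (fun p : Fin n × Fin n => p.1 < p.2))
      ∪ (Finset.univ.filter (fun p : Fin n × Fin n => p.2 < p.1))
      = Finset.univ.filter (fun p : Fin n × Fin n => p.1 ≠ p.2) := by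
    rw [← Finset.filter_or]
    apply Finset.filter_congr
    intro p _
    constructor
    · rintro (h | h) <;> [exact ne_of_lt h; exact (ne_of_lt h).symm]
    · intro h; exact lt_or_gt_of_ne h
  have hdisj : Disjoint (Finset.univ.filter (fun p : Fin n × Fin n => p.1 < p.2))
      (Finset.univ.filter (fun p : Fin n × Fin n => p.2 < p.1)) := by
    rw [Finset.disjoint_filter]
    intro p _ h1 h2
    exact absurd h2 (not_lt_of_gt h1)
  have hcard := Finset.card_union_of_disjoint hdisj
  rw [hunion] at hcard
  have hne : (Finset.univ.filter (fun p : Fin n × Fin n => p.1 ≠ p.2)).card = n * n - n := by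
    have : (Finset.univ.filter (fun p : Fin n × Fin n => p.1 ≠ p.2))
        = (Finset.univ : Finset (Fin n)).offDiag := by
      ext p; simp [Finset.mem_offDiag]
    rw [this, Finset.offDiag_card]
    simp [Nat.mul_sub_one]
  have hmul : n * n - n = n * (n - 1) := by
    cases n with
    | zero => rfl
    | succ k =>
      have h1 : (k+1)*(k+1) = (k+1)*k + (k+1) := by ring
      have h2 : (k+1) - 1 = k := rfl
      rw [h2]
      omega
  omega

/- ---------------- the theorem ---------------- -/

theorem stmt_13 (d n : ℕ) (hd : 2 ≤ d) (hn : 2 ≤ n)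
    (b : Fin n → Fin d → EuclideanSpace ℂ (Fin d))
    (hb : ∀ y, Orthonormal ℂ (b y))
    (hbspan : ∀ y, Submodule.span ℂ (Set.range (b y)) = ⊤)
    (hmub : ∀ y z, y ≠ z → ∀ j k, ‖⟪b y j, b z k⟫‖ ^ 2 = 1 / d) :
    ∃ (ψ : EuclideanSpace ℂ (Fin d × Fin d))
      (A : Fin n → Fin n → Fin d → Fin d → Fin 3 → Matrix (Fin d) (Fin d) ℂ),
      ‖ψ‖ = 1 ∧
      (∀ y z : Fin n, y < z → ∀ j k : Fin d,
        (∀ a, (A y z j k a).PosSemidef) ∧ (∑ a, A y z j k a = 1)) ∧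
      (∑ p ∈ Finset.univ.filter (fun p : Fin n × Fin n => p.1 < p.2), ∑ j, ∑ k,
          (⟪ψ, (Matrix.toEuclideanLin
              ((A p.1 p.2 j k 0 - A p.1 p.2 j k 1) ⊗ₖ
                (outerProj (b p.1 j) - outerProj (b p.2 k)))) ψ⟫
            - (((1 / 2) * Real.sqrt ((d - 1) / d) : ℝ) : ℂ) *
              ⟪ψ, (Matrix.toEuclideanLin
                ((A p.1 p.2 j k 0 + A p.1 p.2 j k 1) ⊗ₖ
                  (1 : Matrix (Fin d) (Fin d) ℂ))) ψ⟫))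
        = (((n * (n - 1) / 2 : ℝ) * Real.sqrt (d * (d - 1)) : ℝ) : ℂ) := by
  have hd0 : 0 < d := by omega
  have hdR : (0:ℝ) < d := by exact_mod_cast hd0
  set r : ℝ := ((d:ℝ) - 1) / d with hr_def
  have hrpos : 0 < r := by
    apply div_pos
    · have : (2:ℝ) ≤ d := by exact_mod_cast hd
      linarith
    · exact hdR
  set L : ℝ := Real.sqrt r with hL_def
  have hLpos : 0 < L := Real.sqrt_pos.mpr hrpos
  have hL2 : L ^ 2 = r := Real.sq_sqrt hrpos.le
  set l : ℂ := (L : ℂ) with hl_def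
  have hl : l ≠ 0 := by
    simp only [hl_def, ne_eq, Complex.ofReal_eq_zero]
    exact hLpos.ne'
  have hlr : (starRingEnd ℂ) l = l := Complex.conj_ofReal L
  have hl2 : l ^ 2 = ((r : ℝ) : ℂ) := by
    rw [hl_def, ← Complex.ofReal_pow, hL2]
  have hdC : ((d:ℝ):ℂ) ≠ 0 := by
    simp only [ne_eq, Complex.ofReal_eq_zero]
    exact hdR.ne'
  -- the inner product as a sum
  have hinner : ∀ (x y : EuclideanSpace ℂ (Fin d)),
      (inner ℂ x y : ℂ) = ∑ k, (starRingEnd ℂ) (x k) * y k := fun x y => by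
    rw [PiLp.inner_apply]
    exact Finset.sum_congr rfl fun k _ => by rw [RCLike.inner_apply]; ring
  -- key facts for an admissible pair of vectors
  set D : Fin n → Fin n → Fin d → Fin d → Matrix (Fin d) (Fin d) ℂ :=
    fun y z j k => outerP (b y j) (b y j) - outerP (b z k) (b z k) with hD_def
  have hunit : ∀ y j, ∑ k, (starRingEnd ℂ) (b y j k) * b y j k = 1 := by
    intro y j
    rw [← hinner]
    simpa using orthonormal_iff_ite.mp (hb y) j j
  have hDh : ∀ y z j k, (D y z j k)ᴴ = D y z j k := by
    intro y z j k
    rw [hD_def]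
    simp only [Matrix.conjTranspose_sub, outerP_conjTranspose]
  have hfacts : ∀ y z j k, y ≠ z →
      (D y z j k * D y z j k * D y z j k = l ^ 2 • D y z j k) ∧
      ((D y z j k * D y z j k).trace = 2 * l ^ 2) := by
    intro y z j k hyz
    set m : ℂ := inner ℂ (b y j) (b z k) with hm_def
    have hm : ∑ k', (starRingEnd ℂ) (b y j k') * b z k k' = m := (hinner _ _).symm
    have hm' : ∑ k', (starRingEnd ℂ) (b z k k') * b y j k' = (starRingEnd ℂ) m := by
      rw [← hinner, hm_def, ← inner_conj_symm]
    have hmm : m * (starRingEnd ℂ) m = 1 - l ^ 2 := by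
      have h1 : m * (starRingEnd ℂ) m = ((‖m‖ ^ 2 : ℝ) : ℂ) := by
        rw [Complex.mul_conj, Complex.normSq_eq_norm_sq]
      rw [h1, hmub y z hyz j k, hl2, hr_def]
      push_cast
      field_simp
      ring
    constructor
    · have h3 := D_cube (b y j) (b z k) m (hunit y j) (hunit z k) hm hm'
      have hsc : (1 : ℂ) - m * (starRingEnd ℂ) m = l ^ 2 := by
        rw [hmm]; ring
      rw [hD_def]
      rw [h3, hsc]
    · have h2 := D_sq_trace (b y j) (b z k) m (hunit y j) (hunit z k) hm hm'
      rw [hD_def]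
      rw [h2]
      linear_combination -2 * hmm
  -- POVM elements
  refine ⟨psiME d, fun y z j k =>
    ![((1/(2*l^2)) • (D y z j k * D y z j k) + ((1:ℂ) * (1/(2*l))) • D y z j k)ᵀ,
      ((1/(2*l^2)) • (D y z j k * D y z j k) + ((-1:ℂ) * (1/(2*l))) • D y z j k)ᵀ,
      (1 - (1/l^2) • (D y z j k * D y z j k))ᵀ],
    psiME_norm hd0, ?_, ?_⟩
  case _ =>
    intro y z hyz j k
    obtain ⟨hD3, htr⟩ := hfacts y z j k (ne_of_lt hyz)
    have hc2 : (starRingEnd ℂ) (1/(2*l^2)) = 1/(2*l^2) := by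
      simp only [map_div₀, _root_.map_mul, map_pow, _root_.map_one, map_ofNat, hlr]
    have hc1 : ∀ e : ℂ, (starRingEnd ℂ) e = e →
        (starRingEnd ℂ) (e * (1/(2*l))) = e * (1/(2*l)) := by
      intro e he
      simp only [map_div₀, _root_.map_mul, map_pow, _root_.map_one, map_ofNat, hlr, he]
    constructor
    · intro a
      fin_cases a
      · refine Matrix.PosSemidef.transpose (psd_of_idem _ ?_ ?_)
        · simp only [Matrix.conjTranspose_add, Matrix.conjTranspose_smul,
            Matrix.conjTranspose_mul, hDh, hc2, hc1 1 (by simp), Complex.star_def]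
        · exact Pplus_idem (D y z j k) l hl hD3 1 (by norm_num)
      · refine Matrix.PosSemidef.transpose (psd_of_idem _ ?_ ?_)
        · simp only [Matrix.conjTranspose_add, Matrix.conjTranspose_smul,
            Matrix.conjTranspose_mul, hDh, hc2, hc1 (-1) (by simp), Complex.star_def]
        · exact Pplus_idem (D y z j k) l hl hD3 (-1) (by norm_num)
      · refine Matrix.PosSemidef.transpose (psd_of_idem _ ?_ ?_)
        · have hcq : (starRingEnd ℂ) (1/l^2) = 1/l^2 := by
            simp only [map_div₀, map_pow, _root_.map_one, hlr]
          simp only [Matrix.conjTranspose_sub, Matrix.conjTranspose_one,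
            Matrix.conjTranspose_smul, Matrix.conjTranspose_mul, hDh, hcq, Complex.star_def]
        · exact Q_idem (D y z j k) l hl hD3
    · rw [Fin.sum_univ_three]
      simp only [Matrix.cons_val_zero, Matrix.cons_val_one, Matrix.head_cons,
        Matrix.cons_val_two, Matrix.tail_cons]
      rw [← Matrix.transpose_add, ← Matrix.transpose_add]
      have : ((1/(2*l^2)) • (D y z j k * D y z j k) + ((1:ℂ) * (1/(2*l))) • D y z j k)
          + ((1/(2*l^2)) • (D y z j k * D y z j k) + ((-1:ℂ) * (1/(2*l))) • D y z j k)
          + (1 - (1/l^2) • (D y z j k * D y z j k)) = 1 := by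
        match_scalars <;> field_simp <;> ring
      rw [this, Matrix.transpose_one]
  case _ =>
    have hdC' : (d:ℂ) ≠ 0 := Nat.cast_ne_zero.mpr hd0.ne'
    have hcast : (((1 / 2) * L : ℝ) : ℂ) = l / 2 := by rw [hl_def]; push_cast; ring
    have hterm : ∀ (y z : Fin n), y ≠ z → ∀ j k : Fin d,
        ⟪psiME d, (Matrix.toEuclideanLin
            (((((1/(2*l^2)) • (D y z j k * D y z j k) + ((1:ℂ) * (1/(2*l))) • D y z j k)ᵀ)
              - (((1/(2*l^2)) • (D y z j k * D y z j k) + ((-1:ℂ) * (1/(2*l))) • D y z j k)ᵀ))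
              ⊗ₖ (outerProj (b y j) - outerProj (b z k)))) (psiME d)⟫
          - (((1 / 2) * L : ℝ) : ℂ) *
            ⟪psiME d, (Matrix.toEuclideanLin
              (((((1/(2*l^2)) • (D y z j k * D y z j k) + ((1:ℂ) * (1/(2*l))) • D y z j k)ᵀ)
                + (((1/(2*l^2)) • (D y z j k * D y z j k) + ((-1:ℂ) * (1/(2*l))) • D y z j k)ᵀ))
                ⊗ₖ (1 : Matrix (Fin d) (Fin d) ℂ))) (psiME d)⟫ = l / d := by
      intro y z hyz j k
      obtain ⟨hD3, htr⟩ := hfacts y z j k hyz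
      have hsub : ((((1/(2*l^2)) • (D y z j k * D y z j k) + ((1:ℂ) * (1/(2*l))) • D y z j k)ᵀ)
          - (((1/(2*l^2)) • (D y z j k * D y z j k) + ((-1:ℂ) * (1/(2*l))) • D y z j k)ᵀ))
          = ((1/l) • D y z j k)ᵀ := by
        rw [← Matrix.transpose_sub]
        refine congrArg Matrix.transpose ?_
        match_scalars <;> field_simp <;> norm_num
      have hadd : ((((1/(2*l^2)) • (D y z j k * D y z j k) + ((1:ℂ) * (1/(2*l))) • D y z j k)ᵀ)
          + (((1/(2*l^2)) • (D y z j k * D y z j k) + ((-1:ℂ) * (1/(2*l))) • D y z j k)ᵀ))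
          = ((1/l^2) • (D y z j k * D y z j k))ᵀ := by
        rw [← Matrix.transpose_add]
        refine congrArg Matrix.transpose ?_
        match_scalars <;> field_simp <;> norm_num
      have hout : outerProj (b y j) - outerProj (b z k) = D y z j k := rfl
      rw [hsub, hadd, hout, psiME_inner_kron hd0, psiME_inner_kron hd0, sum_tr, sum_tr,
        Matrix.smul_mul, Matrix.smul_mul, Matrix.mul_one, Matrix.trace_smul,
        Matrix.trace_smul, htr, hcast]
      simp only [smul_eq_mul]
      field_simp
      ring
    refine Eq.trans (Finset.sum_congr rfl fun p hp => Finset.sum_congr rfl fun j _ =>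
      Finset.sum_congr rfl fun k _ =>
        hterm p.1 p.2 (ne_of_lt (Finset.mem_filter.mp hp).2) j k) ?_
    simp only [Finset.sum_const, Finset.card_univ, Fintype.card_fin, nsmul_eq_mul]
    have hcardR : 2 * ((Finset.univ.filter (fun p : Fin n × Fin n => p.1 < p.2)).card : ℝ)
        = n * ((n:ℝ) - 1) := by
      have h2 := card_lt_pairs n
      have h3 : ((2 * (Finset.univ.filter (fun p : Fin n × Fin n => p.1 < p.2)).card : ℕ) : ℝ)
          = ((n * (n-1) : ℕ) : ℝ) := by exact_mod_cast congrArg (Nat.cast : ℕ → ℝ) h2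
      push_cast [Nat.cast_sub (show 1 ≤ n by omega)] at h3
      linarith
    have hdL : Real.sqrt ((d:ℝ) * ((d:ℝ) - 1)) = (d:ℝ) * L := by
      have h4 : (d:ℝ) * ((d:ℝ) - 1) = (d:ℝ)^2 * r := by
        rw [hr_def]; field_simp
      rw [h4, Real.sqrt_mul (by positivity), Real.sqrt_sq hdR.le, hL_def]
    rw [hdL]
    have h5 : (n:ℝ) * ((n:ℝ) - 1) / 2 * ((d:ℝ) * L)
        = ((Finset.univ.filter (fun p : Fin n × Fin n => p.1 < p.2)).card : ℝ) * ((d:ℝ) * L) := by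
      rw [← hcardR]; ring
    rw [h5]
    push_cast [hl_def]
    field_simp
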